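/- Let ℓ be the smallest positive integer such that ℓ does not divide n, and let t ≥ 1. If J is a zero-sum sequence in ℤ/nℤ of length at least (t+1)n - ℓ + 1, then J contains a zero-sum subsequence of length nt. -/

import Mathlib

open Multiset

/-- Pull a submultiset of a mapped multiset back. -/
lemma exists_le_map {α β : Type*} [DecidableEq β] (f : α → β) :
    ∀ (s : Multiset α) (t : Multiset β), t ≤ s.map f → ∃ u ≤ s, u.map f = t := by
  intro s
  induction s using Multiset.induction with
  | empty =>
    intro t ht
    simp only [Multiset.map_zero, Multiset.le_zero] at ht
    exact ⟨0, le_rfl, by simp [ht]⟩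
  | cons a s ih =>
    intro t ht
    by_cases hfa : f a ∈ t
    · obtain ⟨u, hu, hmap⟩ := ih (t.erase (f a)) (by
        have := Multiset.erase_le_erase (f a) ht
        simpa using this)
      refine ⟨a ::ₘ u, Multiset.cons_le_cons a hu, ?_⟩
      rw [Multiset.map_cons, hmap, Multiset.cons_erase hfa]
    · obtain ⟨u, hu, hmap⟩ := ih t (by
        have : t ≤ f a ::ₘ s.map f := by simpa using ht
        exact (Multiset.le_cons_of_notMem hfa).mp this)
      exact ⟨u, hu.trans (Multiset.le_cons_self s a), hmap⟩

lemma sum_le_sum_of_le {α : Type*} {s t : Multiset (Multiset α)} (h : s ≤ t) :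
    s.sum ≤ t.sum := by
  obtain ⟨u, rfl⟩ := Multiset.le_iff_exists_add.mp h
  simp

lemma sum_sum' {α : Type*} [AddCommMonoid α] (s : Multiset (Multiset α)) :
    s.sum.sum = (s.map Multiset.sum).sum := by
  induction s using Multiset.induction with
  | empty => simp
  | cons a s ih => simp [ih]

/-- Partition a multiset of length `k*d` whose sum is `0 mod d` into `k` blocks of
length `d`, each of sum `0 mod d`. -/
lemma exists_blocks (n d : ℕ) (hd : 0 < d) (hdn : d ∣ n) :
    ∀ (k : ℕ) (J : Multiset (ZMod n)), Multiset.card J = k * d →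
      (ZMod.castHom hdn (ZMod d)) J.sum = 0 →
      ∃ L : List (Multiset (ZMod n)), L.sum = J ∧ L.length = k ∧
        ∀ B ∈ L, Multiset.card B = d ∧ (ZMod.castHom hdn (ZMod d)) B.sum = 0 := by
  intro k
  induction k with
  | zero =>
    intro J hcard _
    refine ⟨[], ?_, rfl, by simp⟩
    simp only [List.sum_nil]
    exact (Multiset.card_eq_zero.mp (by simpa using hcard)).symm
  | succ k ih =>
    intro J hcard hsum
    rcases Nat.eq_zero_or_pos k with rfl | hk
    · exact ⟨[J], by simp, rfl, by simpa [hcard] ⟩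
    · -- extract one block by EGZ over ZMod d
      have hEGZ : 2 * d - 1 ≤ Multiset.card (J.map (ZMod.castHom hdn (ZMod d))) := by
        rw [Multiset.card_map, hcard]
        have : 2 * d ≤ (k + 1) * d := by nlinarith
        omega
      obtain ⟨T, hTle, hTcard, hTsum⟩ := ZMod.erdos_ginzburg_ziv_multiset _ hEGZ
      obtain ⟨B, hBle, hBmap⟩ := exists_le_map _ J T hTle
      have hBcard : Multiset.card B = d := by
        rw [← hTcard, ← hBmap, Multiset.card_map]
      have hBsum : (ZMod.castHom hdn (ZMod d)) B.sum = 0 := by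
        rw [map_multiset_sum, hBmap, hTsum]
      have hJB : B + (J - B) = J := by
        rw [add_comm]; exact tsub_add_cancel_of_le hBle
      have hcard' : Multiset.card (J - B) = k * d := by
        have := Multiset.card_mono hBle
        have h2 : Multiset.card (J - B) = Multiset.card J - Multiset.card B :=
          Multiset.card_sub hBle
        rw [h2, hcard, hBcard, Nat.succ_mul]
        omega
      have hsum' : (ZMod.castHom hdn (ZMod d)) (J - B).sum = 0 := by
        have : B.sum + (J - B).sum = J.sum := by rw [← Multiset.sum_add, hJB]
        have h3 := congrArg (ZMod.castHom hdn (ZMod d)) this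
        rw [_root_.map_add, hBsum, zero_add, hsum] at h3
        exact h3
      obtain ⟨L, hLsum, hLlen, hLblocks⟩ := ih (J - B) hcard' hsum'
      refine ⟨B :: L, ?_, by simp [hLlen], ?_⟩
      · rw [List.sum_cons, hLsum, hJB]
      · intro C hC
        rcases List.mem_cons.mp hC with rfl | hC
        · exact ⟨hBcard, hBsum⟩
        · exact hLblocks C hC

lemma core (n d m : ℕ) (hd : 0 < d) (hm : 0 < m) (hn : n = d * m)
    (J : Multiset (ZMod n)) (hcard : Multiset.card J = 2 * n - d)
    (hsum : J.sum = 0) : ∃ S ≤ J, Multiset.card S = n ∧ S.sum = 0 := by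
  have hn0 : 0 < n := hn ▸ Nat.mul_pos hd hm
  haveI : NeZero n := ⟨hn0.ne'⟩
  haveI : NeZero d := ⟨hd.ne'⟩
  haveI : NeZero m := ⟨hm.ne'⟩
  have hdn : d ∣ n := ⟨m, hn⟩
  -- card J = (2m - 1) * d
  have hdlen : d ≤ n := hn ▸ Nat.le_mul_of_pos_right d hm
  have h2m : 2 * m - 1 + 1 = 2 * m := by omega
  have key : (2 * m - 1) * d + d = 2 * n := by
    calc (2 * m - 1) * d + d = (2 * m - 1 + 1) * d := by ring
      _ = (2 * m) * d := by rw [h2m]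
      _ = 2 * n := by rw [hn]; ring
  have hcard' : Multiset.card J = (2 * m - 1) * d := by omega
  obtain ⟨L, hLsum, hLlen, hLblocks⟩ := exists_blocks n d hd hdn (2 * m - 1) J hcard'
      (by rw [hsum]; exact map_zero _)
  -- each block's sum is d * c_B for c_B := B.sum.val / d
  set c : Multiset (ZMod n) → ℕ := fun B => (B.sum).val / d with hc
  have hblockdvd : ∀ B ∈ L, d ∣ (B.sum).val := by
    intro B hB
    have h0 := (hLblocks B hB).2
    rw [ZMod.castHom_apply, ← ZMod.natCast_val, ZMod.natCast_eq_zero_iff] at h0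
    exact h0
  have hblocksum : ∀ B ∈ L, B.sum = ((d * c B : ℕ) : ZMod n) := by
    intro B hB
    rw [hc]
    rw [Nat.mul_div_cancel' (hblockdvd B hB)]
    exact (ZMod.natCast_zmod_val _).symm
  -- apply EGZ over ZMod m to the c-values
  set g : Multiset (ZMod n) → ZMod m := fun B => ((c B : ℕ) : ZMod m) with hg
  have hMcard : 2 * m - 1 ≤ Multiset.card ((↑L : Multiset (Multiset (ZMod n))).map g) := by
    rw [Multiset.card_map, Multiset.coe_card, hLlen]
  obtain ⟨T, hTle, hTcard, hTsum⟩ := ZMod.erdos_ginzburg_ziv_multiset _ hMcard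
  obtain ⟨U, hUle, hUmap⟩ := exists_le_map g (↑L) T hTle
  have hUmem : ∀ B ∈ U, B ∈ L := by
    intro B hB
    have := Multiset.mem_of_le hUle hB
    simpa using this
  have hUcard : Multiset.card U = m := by rw [← hTcard, ← hUmap, Multiset.card_map]
  refine ⟨U.sum, ?_, ?_, ?_⟩
  · have : U.sum ≤ (↑L : Multiset (Multiset (ZMod n))).sum := sum_le_sum_of_le hUle
    rwa [Multiset.sum_coe, hLsum] at this
  · -- cardinality
    have hcardsum : ∀ V : Multiset (Multiset (ZMod n)),
        Multiset.card V.sum = (V.map Multiset.card).sum := by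
      intro V
      induction V using Multiset.induction with
      | empty => simp
      | cons a s ih => simp [ih]
    rw [hcardsum]
    have hrep : U.map Multiset.card = Multiset.replicate m d := by
      rw [Multiset.eq_replicate]
      constructor
      · rw [Multiset.card_map, hUcard]
      · intro x hx
        obtain ⟨B, hB, rfl⟩ := Multiset.mem_map.mp hx
        exact (hLblocks B (hUmem B hB)).1
    rw [hrep, Multiset.sum_replicate, smul_eq_mul, hn, mul_comm]
  · -- sum is zero
    have hmdvd : m ∣ (U.map c).sum := by
      have h0 : ((U.map c).sum : ZMod m) = 0 := by
        rw [Nat.cast_multiset_sum, Multiset.map_map]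
        rw [← hUmap] at hTsum
        exact hTsum
      exact (ZMod.natCast_eq_zero_iff _ _).mp h0
    rw [sum_sum']
    have hmapeq : U.map Multiset.sum = (U.map fun B => (d * c B : ℕ)).map
        (Nat.cast : ℕ → ZMod n) := by
      rw [Multiset.map_map]
      apply Multiset.map_congr rfl
      intro B hB
      exact hblocksum B (hUmem B hB)
    rw [hmapeq, ← Nat.cast_multiset_sum, Multiset.sum_map_mul_left,
      ZMod.natCast_eq_zero_iff]
    have hdd : d * m ∣ d * (U.map c).sum := mul_dvd_mul_left d hmdvd
    rwa [← hn] at hdd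

theorem cyclic_upper_t (n ℓ t : ℕ) (hn : 0 < n) (ht : 1 ≤ t)
    (hℓ : IsLeast {m : ℕ | 0 < m ∧ ¬ m ∣ n} ℓ)
    (J : Multiset (ZMod n)) (hJ : (t + 1) * n - ℓ + 1 ≤ Multiset.card J)
    (hsum : J.sum = 0) :
    ∃ S ≤ J, Multiset.card S = n * t ∧ S.sum = 0 := by
  clear ht
  have hℓ2 : 2 ≤ ℓ := by
    rcases hℓ.1 with ⟨hpos, hndvd⟩
    have h1 : ℓ ≠ 1 := fun h => hndvd (h ▸ one_dvd n)
    omega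
  have hℓn : ℓ ≤ n + 1 := hℓ.2 ⟨Nat.succ_pos n, fun h => by
    have := Nat.le_of_dvd hn h; omega⟩
  -- base case : find a zero-sum submultiset of size n
  have base : ∀ K : Multiset (ZMod n), 2 * n - ℓ + 1 ≤ Multiset.card K → K.sum = 0 →
      ∃ S ≤ K, Multiset.card S = n ∧ S.sum = 0 := by
    intro K hK hKsum
    rcases Nat.lt_or_ge (Multiset.card K) (2 * n - 1) with hlt | hge
    · set d := 2 * n - Multiset.card K with hd
      have hd2 : 2 ≤ d := by omega
      have hdℓ : d < ℓ := by omega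
      have hddvd : d ∣ n := by
        by_contra hnd
        exact absurd (hℓ.2 ⟨by omega, hnd⟩) (by omega)
      obtain ⟨m, hm⟩ := hddvd
      have hm0 : 0 < m := by
        rcases Nat.eq_zero_or_pos m with rfl | h
        · omega
        · exact h
      have hKcard : Multiset.card K = 2 * n - d := by omega
      exact core n d m (by omega) hm0 hm K hKcard hKsum
    · obtain ⟨S, hS, hScard, hSsum⟩ := ZMod.erdos_ginzburg_ziv_multiset K hge
      exact ⟨S, hS, hScard, hSsum⟩
  induction t generalizing J with
  | zero => exact ⟨0, Multiset.zero_le J, by simp, by simp⟩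
  | succ t ih =>
    obtain ⟨B, hBle, hBcard, hBsum⟩ := base J (by
      have h0 : 2 * n ≤ (t + 1 + 1) * n := Nat.mul_le_mul_right n (by omega)
      generalize hX : (t + 1 + 1) * n = X at hJ h0
      omega) hsum
    rcases Nat.eq_zero_or_pos t with rfl | ht0
    · exact ⟨B, hBle, by omega, hBsum⟩
    have hJB : B + (J - B) = J := by rw [add_comm]; exact tsub_add_cancel_of_le hBle
    have hJBsum : (J - B).sum = 0 := by
      have : B.sum + (J - B).sum = J.sum := by rw [← Multiset.sum_add, hJB]
      rw [hBsum, zero_add, hsum] at this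
      exact this
    have hJBcard : (t + 1) * n - ℓ + 1 ≤ Multiset.card (J - B) := by
      rw [Multiset.card_sub hBle, hBcard]
      have h1 : (t + 1 + 1) * n = (t + 1) * n + n := by ring
      rw [h1] at hJ
      have h2 : 2 * n ≤ (t + 1) * n := Nat.mul_le_mul_right n (by omega)
      generalize hX : (t + 1) * n = X at hJ h2 ⊢
      omega
    obtain ⟨S', hS'le, hS'card, hS'sum⟩ := ih (J - B) hJBcard hJBsum
    refine ⟨S' + B, ?_, ?_, ?_⟩
    · calc S' + B ≤ (J - B) + B := add_le_add_left hS'le B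
        _ = J := by rw [add_comm]; exact hJB
    · rw [Multiset.card_add, hS'card, hBcard]; ring
    · rw [Multiset.sum_add, hS'sum, hBsum, add_zero]
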